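/- Every irrational x ∈ (0,1) has an N-continued fraction expansion: the convergents p_n(x)/q_n(x) converge to x as n → ∞, i.e. x = N/(a_1(x) + N/(a_2(x) + N/(a_3(x) + ⋯))). -/

import Mathlib

open MeasureTheory Set Filter
open scoped Classical Topology ENNReal

/-- The N-continued fraction transformation `T_N x = N/x - ⌊N/x⌋` (with `T_N 0 = 0`). -/
noncomputable def TN (N : ℕ) (x : ℝ) : ℝ := (N : ℝ) / x - ⌊(N : ℝ) / x⌋

/-- `digit N x k` is the (k+1)-st N-continued fraction digit `a_{k+1}(x) = ⌊N / T_N^k(x)⌋`. -/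
noncomputable def digit (N : ℕ) (x : ℝ) (k : ℕ) : ℕ := ⌊(N : ℝ) / (TN N)^[k] x⌋₊

/-- Numerators: `pA N a (m+1) = p_m`, where `p_{-1}=1`, `p_0=0`, `p_k = a_k p_{k-1} + N p_{k-2}`
and `a k` denotes the digit `a_{k+1}`. -/
noncomputable def pA (N : ℕ) (a : ℕ → ℕ) : ℕ → ℝ
  | 0 => 1
  | 1 => 0
  | (k+2) => (a k : ℝ) * pA N a (k+1) + (N : ℝ) * pA N a k

/-- Denominators: `qA N a (m+1) = q_m`, where `q_{-1}=0`, `q_0=1`, `q_k = a_k q_{k-1} + N q_{k-2}`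
and `a k` denotes the digit `a_{k+1}`. -/
noncomputable def qA (N : ℕ) (a : ℕ → ℕ) : ℕ → ℝ
  | 0 => 0
  | 1 => 1
  | (k+2) => (a k : ℝ) * qA N a (k+1) + (N : ℝ) * qA N a k

private lemma TN_step (N : ℕ) (hN : 1 ≤ N) (y : ℝ) (hy : y ∈ Set.Ioo (0:ℝ) 1)
    (hyi : Irrational y) : TN N y ∈ Set.Ioo (0:ℝ) 1 ∧ Irrational (TN N y) := by
  have hNne : N ≠ 0 := by omega
  have hdiv : Irrational ((N : ℝ) / y) := hyi.natCast_div hNne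
  have hTN : TN N y = Int.fract ((N : ℝ) / y) := rfl
  have hirr : Irrational (TN N y) := by
    rw [hTN, Int.fract]
    exact hdiv.sub_intCast _
  have h0 : (0:ℝ) ≤ TN N y := hTN ▸ Int.fract_nonneg _
  refine ⟨⟨?_, ?_⟩, hirr⟩
  · rcases h0.lt_or_eq with h | h
    · exact h
    · exact absurd h.symm hirr.ne_zero
  · rw [hTN]; exact Int.fract_lt_one _

/-- Every irrational `x ∈ (0,1)` has an N-continued fraction expansion:
the convergents `p_n(x)/q_n(x)` converge to `x`. -/
theorem convergents_tendsto (N : ℕ) (hN : 1 ≤ N) (x : ℝ) (hx : x ∈ Ioo (0:ℝ) 1)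
    (hxi : Irrational x) :
    Tendsto (fun n : ℕ => pA N (digit N x) (n+1) / qA N (digit N x) (n+1)) atTop (𝓝 x) := by
  set a : ℕ → ℕ := digit N x with ha
  set P : ℕ → ℝ := pA N a with hP
  set Q : ℕ → ℝ := qA N a with hQdef
  set t : ℕ → ℝ := fun k => (TN N)^[k] x with htdef
  have hNpos : (0:ℝ) < N := by exact_mod_cast Nat.lt_of_lt_of_le Nat.zero_lt_one hN
  have hN1 : (1:ℝ) ≤ N := by exact_mod_cast hN
  -- orbit stays in (0,1) and irrational
  have horb : ∀ k, t k ∈ Set.Ioo (0:ℝ) 1 ∧ Irrational (t k) := by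
    intro k
    induction k with
    | zero => exact ⟨hx, hxi⟩
    | succ k ih =>
      have : t (k+1) = TN N (t k) := by
        simp only [htdef, Function.iterate_succ_apply']
      rw [this]
      exact TN_step N hN (t k) ih.1 ih.2
  -- digits are ≥ N
  have hdig : ∀ k, (N:ℝ) ≤ (a k : ℝ) := by
    intro k
    have ht1 : t k < 1 := (horb k).1.2
    have ht0 : 0 < t k := (horb k).1.1
    have hlt : (N:ℝ) < (N:ℝ) / t k := by
      rw [lt_div_iff₀ ht0]
      nlinarith
    have : (N:ℝ) ≤ ⌊(N:ℝ) / t k⌋₊ := by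
      calc (N:ℝ) ≤ (⌊(N:ℝ)⌋₊ : ℝ) := by simp
        _ ≤ (⌊(N:ℝ) / t k⌋₊ : ℝ) := by
            exact_mod_cast Nat.floor_le_floor hlt.le
    exact this
  -- key identity:  (a k + t (k+1)) * t k = N
  have hkey : ∀ k, ((a k : ℝ) + t (k+1)) * t k = N := by
    intro k
    have ht0 : 0 < t k := (horb k).1.1
    have hfl : ((a k : ℝ)) = ((⌊(N:ℝ) / t k⌋ : ℤ) : ℝ) := by
      rw [ha]
      exact natCast_floor_eq_intCast_floor (by positivity)
    have hsucc : t (k+1) = (N:ℝ) / t k - ⌊(N:ℝ) / t k⌋ := by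
      simp only [htdef, Function.iterate_succ_apply']
      rfl
    rw [hsucc, hfl]
    field_simp
    ring
  -- main identity
  have hmain : ∀ n, x * (Q (n+1) + t n * Q n) = P (n+1) + t n * P n := by
    intro n
    induction n with
    | zero =>
      have : t 0 = x := rfl
      simp only [hP, hQdef, pA, qA, this]
      ring
    | succ n ih =>
      have hQrec : Q (n+2) = (a n : ℝ) * Q (n+1) + (N:ℝ) * Q n := rfl
      have hPrec : P (n+2) = (a n : ℝ) * P (n+1) + (N:ℝ) * P n := rfl
      rw [hQrec, hPrec]
      linear_combination ((a n : ℝ) + t (n+1)) * ih + (P n - x * Q n) * hkey n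
  -- determinant
  have hdet : ∀ n, P n * Q (n+1) - P (n+1) * Q n = (-(N:ℝ))^n := by
    intro n
    induction n with
    | zero => simp [hP, hQdef, pA, qA]
    | succ n ih =>
      have hQrec : Q (n+2) = (a n : ℝ) * Q (n+1) + (N:ℝ) * Q n := rfl
      have hPrec : P (n+2) = (a n : ℝ) * P (n+1) + (N:ℝ) * P n := rfl
      rw [hQrec, hPrec, pow_succ]
      linear_combination (-(N:ℝ)) * ih
  -- basic facts about Q
  have hQfacts : ∀ n, 0 ≤ Q n ∧ Q n ≤ Q (n+1) ∧ 1 ≤ Q (n+1) := by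
    intro n
    induction n with
    | zero =>
      have h0 : Q 0 = 0 := rfl
      have h1 : Q 1 = 1 := rfl
      rw [h0, h1]; norm_num
    | succ n ih =>
      obtain ⟨h0, h1, h2⟩ := ih
      have hQrec : Q (n+2) = (a n : ℝ) * Q (n+1) + (N:ℝ) * Q n := rfl
      have hd := hdig n
      refine ⟨by linarith, ?_, ?_⟩
      · rw [hQrec]; nlinarith
      · rw [hQrec]; nlinarith
  have hQstep : ∀ n, (N:ℝ) * Q (n+1) ≤ Q (n+2) := by
    intro n
    have hQrec : Q (n+2) = (a n : ℝ) * Q (n+1) + (N:ℝ) * Q n := rfl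
    have hd := hdig n
    have h0 := (hQfacts n).1
    have h2 := (hQfacts n).2.2
    rw [hQrec]; nlinarith
  -- growth of products of consecutive Q's
  have hv : ∀ n, ((N:ℝ) * ((N:ℝ)+1))^n ≤ Q (n+1) * Q (n+2) := by
    intro n
    induction n with
    | zero =>
      have h1 : Q 1 = 1 := rfl
      have hQrec : Q 2 = (a 0 : ℝ) * Q 1 + (N:ℝ) * Q 0 := rfl
      have h0 : Q 0 = 0 := rfl
      rw [pow_zero, h1, hQrec, h1, h0]
      have := hdig 0
      nlinarith
    | succ n ih =>
      have hQrec : Q (n+3) = (a (n+1) : ℝ) * Q (n+2) + (N:ℝ) * Q (n+1) := rfl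
      have hd := hdig (n+1)
      have h1 := (hQfacts (n+1)).2.2
      have h2 := (hQfacts (n+2)).2.2
      have hs := hQstep n
      have hstep : ((N:ℝ) * ((N:ℝ)+1)) * Q (n+1) ≤ Q (n+3) := by
        rw [hQrec]; nlinarith
      have hQ2pos : (0:ℝ) < Q (n+2) := lt_of_lt_of_le zero_lt_one h1
      calc ((N:ℝ) * ((N:ℝ)+1))^(n+1)
          = ((N:ℝ) * ((N:ℝ)+1))^n * ((N:ℝ) * ((N:ℝ)+1)) := pow_succ _ _
        _ ≤ (Q (n+1) * Q (n+2)) * ((N:ℝ) * ((N:ℝ)+1)) := by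
            apply mul_le_mul_of_nonneg_right ih; positivity
        _ = Q (n+2) * (((N:ℝ) * ((N:ℝ)+1)) * Q (n+1)) := by ring
        _ ≤ Q (n+2) * Q (n+3) := by
            exact mul_le_mul_of_nonneg_left hstep hQ2pos.le
  -- the error bound
  set r : ℝ := ((N:ℝ)+1)⁻¹ with hr
  have hrpos : 0 < r := by positivity
  have hrlt : r < 1 := by
    rw [hr, inv_lt_one_iff₀]
    right; linarith
  have herr : ∀ m : ℕ, |P (m+2) / Q (m+2) - x| ≤ ((N:ℝ) * ((N:ℝ)+1)) * r^(m+1) := by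
    intro m
    set n := m + 1 with hn
    have hD : 0 < Q (n+1) := lt_of_lt_of_le zero_lt_one (hQfacts n).2.2
    have htn0 : 0 < t n := (horb n).1.1
    have htn1 : t n < 1 := (horb n).1.2
    have hQn0 : 0 ≤ Q n := (hQfacts n).1
    have hD' : 0 < Q (n+1) + t n * Q n := by nlinarith
    have hx' : x = (P (n+1) + t n * P n) / (Q (n+1) + t n * Q n) := by
      rw [eq_div_iff hD'.ne']
      exact hmain n
    have heq : P (n+1) / Q (n+1) - x
        = t n * (P (n+1) * Q n - P n * Q (n+1)) / ((Q (n+1) + t n * Q n) * Q (n+1)) := by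
      rw [hx', div_sub_div _ _ hD.ne' hD'.ne',
        mul_comm (Q (n+1)) (Q (n+1) + t n * Q n)]
      congr 1
      ring
    have habs : |P (n+1) / Q (n+1) - x|
        = t n * (N:ℝ)^n / ((Q (n+1) + t n * Q n) * Q (n+1)) := by
      rw [heq]
      rw [abs_div, abs_of_pos (by positivity : (0:ℝ) < (Q (n+1) + t n * Q n) * Q (n+1))]
      congr 1
      rw [abs_mul, abs_of_pos htn0]
      congr 1
      have : P (n+1) * Q n - P n * Q (n+1) = -((-(N:ℝ))^n) := by
        have := hdet n; linarith
      rw [this, abs_neg, abs_pow, abs_neg, abs_of_pos hNpos]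
    rw [habs]
    have hlow : ((N:ℝ) * ((N:ℝ)+1))^m ≤ (Q (n+1) + t n * Q n) * Q (n+1) := by
      calc ((N:ℝ) * ((N:ℝ)+1))^m ≤ Q (m+1) * Q (m+2) := hv m
        _ ≤ (Q (n+1) + t n * Q n) * Q (n+1) := by
            have h1 : Q (m+1) ≤ Q (m+2) := (hQfacts (m+1)).2.1
            have h2 : Q (m+2) ≤ Q (m+2) + t n * Q n := by nlinarith
            have h3 : 0 ≤ Q (m+2) := le_trans zero_le_one (hQfacts (m+1)).2.2
            calc Q (m+1) * Q (m+2) ≤ Q (m+2) * Q (m+2) :=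
                  mul_le_mul_of_nonneg_right h1 h3
              _ ≤ (Q (m+2) + t n * Q n) * Q (m+2) :=
                  mul_le_mul_of_nonneg_right h2 h3
              _ = (Q (n+1) + t n * Q n) * Q (n+1) := by rw [hn]
    have hnum : t n * (N:ℝ)^n ≤ (N:ℝ)^n := by
      nlinarith [pow_pos hNpos n]
    have hb : t n * (N:ℝ)^n / ((Q (n+1) + t n * Q n) * Q (n+1))
        ≤ (N:ℝ)^n / ((N:ℝ) * ((N:ℝ)+1))^m := by
      apply div_le_div₀ (by positivity) hnum (by positivity) hlow
    refine hb.trans (le_of_eq ?_)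
    rw [hn, hr]
    rw [mul_pow, inv_pow]
    field_simp
    ring
  -- conclusion by squeezing
  have hzero : Tendsto (fun n : ℕ => P (n+1) / Q (n+1) - x) atTop (𝓝 0) := by
    apply squeeze_zero_norm' (a := fun n : ℕ => ((N:ℝ) * ((N:ℝ)+1)) * r^n)
    · filter_upwards [eventually_ge_atTop 1] with n hn
      obtain ⟨m, rfl⟩ := Nat.exists_eq_add_of_le hn
      rw [add_comm 1 m]
      simpa using herr m
    · have := (tendsto_pow_atTop_nhds_zero_of_lt_one hrpos.le hrlt).const_mul
        ((N:ℝ) * ((N:ℝ)+1))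
      simpa using this
  have := hzero.add_const x
  simpa using this
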